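/- Let d ∈ ℕ and let 𝒲 = (w^λ)_{λ>0} be a weight function system on ℝ^d satisfying (wM). Then 𝒲 satisfies (N) if and only if for every λ > 0 there exists μ > 0 such that ∑_{j∈ℤ^d} w^λ(j)/w^μ(j) < ∞. -/

import Mathlib

open MeasureTheory Filter ENNReal Asymptotics

noncomputable section

/-- Partial derivative in the `i`-th coordinate direction. -/
def pd (d : ℕ) (i : Fin d) (f : EuclideanSpace ℝ (Fin d) → ℂ) :
    EuclideanSpace ℝ (Fin d) → ℂ :=
  fun x => fderiv ℝ f x (EuclideanSpace.single i 1)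

/-- Iterated partial derivative in the `i`-th coordinate direction. -/
def pdPow (d : ℕ) (i : Fin d) :
    ℕ → (EuclideanSpace ℝ (Fin d) → ℂ) → EuclideanSpace ℝ (Fin d) → ℂ
  | 0, f => f
  | n + 1, f => pd d i (pdPow d i n f)

/-- Mixed partial derivative `∂^α` for a multi-index `α : Fin d → ℕ`. -/
def pdMulti (d : ℕ) (α : Fin d → ℕ) (f : EuclideanSpace ℝ (Fin d) → ℂ) :
    EuclideanSpace ℝ (Fin d) → ℂ :=
  (List.finRange d).foldr (fun i g => pdPow d i (α i) g) f

/-- The Gelfand–Shilov seminorm `‖φ‖_{𝒮^M_{w,q}}`, as an `ℝ≥0∞`-valued quantity: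
`sup_α ‖(∂^α φ)·w‖_{L^q} / M_α`. -/
def gsNorm (d : ℕ) (M : (Fin d → ℕ) → ℝ) (w : EuclideanSpace ℝ (Fin d) → ℝ)
    (q : ℝ≥0∞) (φ : EuclideanSpace ℝ (Fin d) → ℂ) : ℝ≥0∞ :=
  ⨆ α : Fin d → ℕ,
    eLpNorm (fun x => ‖pdMulti d α φ x‖ * w x) q volume / ENNReal.ofReal (M α)

/-- The lattice point of `ℤ^d` inside `ℝ^d`. -/
def intPt (d : ℕ) (j : Fin d → ℤ) : EuclideanSpace ℝ (Fin d) :=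
  (WithLp.equiv 2 (Fin d → ℝ)).symm fun i => (j i : ℝ)

/-- The associated function `ω_M(x) = sup_α log (|x^α| M_0 / M_α)` of a (multi-indexed)
sequence `M`. -/
def assocFun (d : ℕ) (M : (Fin d → ℕ) → ℝ) (x : EuclideanSpace ℝ (Fin d)) : ℝ :=
  ⨆ α : Fin d → ℕ, Real.log ((∏ i, |x i| ^ α i) * M 0 / M α)

/-- `w` is a weight function system on `ℝ^d`: each `w λ` (for `λ > 0`) is continuous, `≥ 1`,
and `w λ ≤ w μ` pointwise whenever `μ ≤ λ`. -/
structure IsWFS (d : ℕ) (w : ℝ → EuclideanSpace ℝ (Fin d) → ℝ) : Prop where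
  cont : ∀ l, 0 < l → Continuous (w l)
  one_le : ∀ l, 0 < l → ∀ x, 1 ≤ w l x
  mono : ∀ m l, 0 < m → m ≤ l → ∀ x, w l x ≤ w m x

/-- Condition (wM) (Beurling) for a weight function system. -/
def WFS_wM_B (d : ℕ) (w : ℝ → EuclideanSpace ℝ (Fin d) → ℝ) : Prop :=
  ∀ l, 0 < l → ∃ m, 0 < m ∧ ∃ C, 0 < C ∧
    ∀ x y : EuclideanSpace ℝ (Fin d), ‖y‖ ≤ 1 → w l (x + y) ≤ C * w m x

/-- Condition {wM} (Roumieu) for a weight function system. -/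
def WFS_wM_R (d : ℕ) (w : ℝ → EuclideanSpace ℝ (Fin d) → ℝ) : Prop :=
  ∀ m, 0 < m → ∃ l, 0 < l ∧ ∃ C, 0 < C ∧
    ∀ x y : EuclideanSpace ℝ (Fin d), ‖y‖ ≤ 1 → w l (x + y) ≤ C * w m x

/-- Condition (M) (Beurling) for a weight function system. -/
def WFS_M_B (d : ℕ) (w : ℝ → EuclideanSpace ℝ (Fin d) → ℝ) : Prop :=
  ∀ l, 0 < l → ∃ m, 0 < m ∧ ∃ n, 0 < n ∧ ∃ C, 0 < C ∧
    ∀ x y : EuclideanSpace ℝ (Fin d), w l (x + y) ≤ C * w m x * w n y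

/-- Condition (N) (Beurling) for a weight function system. -/
def WFS_N_B (d : ℕ) (w : ℝ → EuclideanSpace ℝ (Fin d) → ℝ) : Prop :=
  ∀ l, 0 < l → ∃ m, 0 < m ∧ Integrable (fun x => w l x / w m x) volume

/-- Condition {N} (Roumieu) for a weight function system. -/
def WFS_N_R (d : ℕ) (w : ℝ → EuclideanSpace ℝ (Fin d) → ℝ) : Prop :=
  ∀ m, 0 < m → ∃ l, 0 < l ∧ Integrable (fun x => w l x / w m x) volume

/-- `M` is a weight sequence system on `ℝ^d`: each `M λ` (for `λ > 0`) is a positive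
sequence with `(M^λ_α)^{1/|α|} → ∞` satisfying the log-convexity condition (M.1), and
`M^λ_α ≤ M^μ_α` whenever `λ ≤ μ`. -/
structure IsWSS (d : ℕ) (M : ℝ → (Fin d → ℕ) → ℝ) : Prop where
  pos : ∀ l, 0 < l → ∀ α, 0 < M l α
  growth : ∀ l, 0 < l → ∀ R : ℝ, 0 < R → ∃ N : ℕ, ∀ α : Fin d → ℕ,
    N ≤ ∑ i, α i → R ^ (∑ i, α i) ≤ M l α
  logconvex : ∀ l, 0 < l → ∀ (α : Fin d → ℕ) (j : Fin d),
    M l (α + Pi.single j 1) ^ 2 ≤ M l α * M l (α + Pi.single j 2)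
  mono : ∀ l m, 0 < l → l ≤ m → ∀ α, M l α ≤ M m α

/-- Condition (L) (Beurling) for a weight sequence system. -/
def WSS_L_B (d : ℕ) (M : ℝ → (Fin d → ℕ) → ℝ) : Prop :=
  ∀ R : ℝ, 0 < R → ∀ l, 0 < l → ∃ m, 0 < m ∧ ∃ C, 0 < C ∧
    ∀ α : Fin d → ℕ, R ^ (∑ i, α i) * M m α ≤ C * M l α

/-- Condition {L} (Roumieu) for a weight sequence system. -/
def WSS_L_R (d : ℕ) (M : ℝ → (Fin d → ℕ) → ℝ) : Prop :=
  ∀ R : ℝ, 0 < R → ∀ m, 0 < m → ∃ l, 0 < l ∧ ∃ C, 0 < C ∧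
    ∀ α : Fin d → ℕ, R ^ (∑ i, α i) * M m α ≤ C * M l α

/-- Condition (𝔐.2)' (Beurling) for a weight sequence system. -/
def WSS_M2_B (d : ℕ) (M : ℝ → (Fin d → ℕ) → ℝ) : Prop :=
  ∀ l, 0 < l → ∃ m, 0 < m ∧ ∃ C, 0 < C ∧ ∃ H, 0 < H ∧
    ∀ (α : Fin d → ℕ) (j : Fin d),
      M m (α + Pi.single j 1) ≤ C * H ^ (∑ i, α i) * M l α

/-- Condition {𝔐.2}' (Roumieu) for a weight sequence system. -/
def WSS_M2_R (d : ℕ) (M : ℝ → (Fin d → ℕ) → ℝ) : Prop :=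
  ∀ m, 0 < m → ∃ l, 0 < l ∧ ∃ C, 0 < C ∧ ∃ H, 0 < H ∧
    ∀ (α : Fin d → ℕ) (j : Fin d),
      M l (α + Pi.single j 1) ≤ C * H ^ (∑ i, α i) * M m α

/-- A weight sequence system is accelerating if `M^λ_{α+e_j}/M^λ_α ≤ M^μ_{α+e_j}/M^μ_α`
for `λ ≤ μ`. -/
def WSSAccel (d : ℕ) (M : ℝ → (Fin d → ℕ) → ℝ) : Prop :=
  ∀ l m, 0 < l → l ≤ m → ∀ (α : Fin d → ℕ) (j : Fin d),
    M l (α + Pi.single j 1) / M l α ≤ M m (α + Pi.single j 1) / M m α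

/-- A weight sequence system is isotropically decomposable: there is a partition of the `d`
coordinates into `k` blocks (equivalently, after a permutation of the coordinates, a
decomposition `ℕ^d = ℕ^{d_1} × ⋯ × ℕ^{d_k}`) and positive functions `m^λ_j : ℕ → (0,∞)` with
`M^λ_α = ∏_j m^λ_j (|α^{(j)}|)`. -/
def IsoDecomposable (d : ℕ) (M : ℝ → (Fin d → ℕ) → ℝ) : Prop :=
  ∃ (k : ℕ) (b : Fin d → Fin k) (m : ℝ → Fin k → ℕ → ℝ),
    (∀ l, 0 < l → ∀ j n, 0 < m l j n) ∧
    ∀ l, 0 < l → ∀ α : Fin d → ℕ,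
      M l α = ∏ j, m l j (∑ i ∈ Finset.univ.filter fun i => b i = j, α i)

/-- Membership in the Beurling Gelfand–Shilov class `𝒮^{(𝔐)}_{(𝒲),q}`. -/
def gsBeurling (d : ℕ) (M : ℝ → (Fin d → ℕ) → ℝ) (w : ℝ → EuclideanSpace ℝ (Fin d) → ℝ)
    (q : ℝ≥0∞) (φ : EuclideanSpace ℝ (Fin d) → ℂ) : Prop :=
  ContDiff ℝ (⊤ : ℕ∞) φ ∧ ∀ l, 0 < l → gsNorm d (M l) (w l) q φ < ⊤

/-- Membership in the Roumieu Gelfand–Shilov class `𝒮^{{𝔐}}_{{𝒲},q}`. -/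
def gsRoumieu (d : ℕ) (M : ℝ → (Fin d → ℕ) → ℝ) (w : ℝ → EuclideanSpace ℝ (Fin d) → ℝ)
    (q : ℝ≥0∞) (φ : EuclideanSpace ℝ (Fin d) → ℂ) : Prop :=
  ContDiff ℝ (⊤ : ℕ∞) φ ∧ ∃ l, 0 < l ∧ gsNorm d (M l) (w l) q φ < ⊤

/-- Membership in the auxiliary space `𝒮̃^{(𝔐)}_{(𝒲)}`. -/
def gsTilde (d : ℕ) (M : ℝ → (Fin d → ℕ) → ℝ) (w : ℝ → EuclideanSpace ℝ (Fin d) → ℝ)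
    (ψ : EuclideanSpace ℝ (Fin d) → ℂ) : Prop :=
  ContDiff ℝ (⊤ : ℕ∞) ψ ∧ ∀ l, 0 < l → ∀ k : ℕ, ∃ C : ℝ,
    ∀ (α : Fin d → ℕ) (x : EuclideanSpace ℝ (Fin d)),
      ‖pdMulti d α ψ x‖ * (1 + ‖x‖) ^ k * w l x / M l α ≤ C

end


section Helpers

open MeasureTheory

variable {d : ℕ} {w : ℝ → EuclideanSpace ℝ (Fin d) → ℝ}

/-- Iterated (wM): translation bound for shifts of norm at most `n`. -/
lemma wM_ext (hwM : WFS_wM_B d w) (n : ℕ) :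
    ∀ l, 0 < l → ∃ m, 0 < m ∧ ∃ C, 0 < C ∧
      ∀ x y : EuclideanSpace ℝ (Fin d), ‖y‖ ≤ n → w l (x + y) ≤ C * w m x := by
  induction n with
  | zero =>
    intro l hl
    refine ⟨l, hl, 1, one_pos, fun x y hy => ?_⟩
    have hy0 : y = 0 := by
      have : ‖y‖ ≤ 0 := by simpa using hy
      simpa using le_antisymm this (norm_nonneg y)
    simp [hy0]
  | succ n ih =>
    intro l hl
    obtain ⟨m₁, hm₁, C₁, hC₁, h₁⟩ := hwM l hl
    obtain ⟨m, hm, C, hC, h⟩ := ih m₁ hm₁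
    refine ⟨m, hm, C₁ * C, by positivity, fun x y hy => ?_⟩
    by_cases hy1 : ‖y‖ ≤ 1
    · have e1 : w l (x + y) ≤ C₁ * w m₁ x := h₁ x y hy1
      have e2 : w m₁ x ≤ C * w m x := by simpa using h x 0 (by simp)
      calc w l (x + y) ≤ C₁ * w m₁ x := e1
        _ ≤ C₁ * (C * w m x) := by nlinarith
        _ = C₁ * C * w m x := by ring
    · push_neg at hy1
      have hyne : ‖y‖ ≠ 0 := by positivity
      set y₂ : EuclideanSpace ℝ (Fin d) := ‖y‖⁻¹ • y with hy₂def
      set y₁ : EuclideanSpace ℝ (Fin d) := y - y₂ with hy₁def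
      have hn2 : ‖y₂‖ = 1 := by
        rw [hy₂def, norm_smul, norm_inv, norm_norm, inv_mul_cancel₀ hyne]
      have hy₁eq : y₁ = (1 - ‖y‖⁻¹) • y := by
        rw [hy₁def, hy₂def, sub_smul, one_smul]
      have hn1 : ‖y₁‖ ≤ n := by
        rw [hy₁eq, norm_smul, Real.norm_eq_abs]
        have h0 : (0:ℝ) ≤ 1 - ‖y‖⁻¹ := by
          have : ‖y‖⁻¹ ≤ 1 := by
            rw [inv_le_one_iff₀]; right; exact hy1.le
          linarith
        rw [abs_of_nonneg h0]
        have hyn : ‖y‖ ≤ n + 1 := by exact_mod_cast hy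
        have : (1 - ‖y‖⁻¹) * ‖y‖ = ‖y‖ - 1 := by
          field_simp
        rw [this]; linarith
      have hsum : y₁ + y₂ = y := by rw [hy₁def]; abel
      have e1 : w l ((x + y₁) + y₂) ≤ C₁ * w m₁ (x + y₁) := h₁ (x + y₁) y₂ (le_of_eq hn2)
      have e2 : w m₁ (x + y₁) ≤ C * w m x := h x y₁ hn1
      have hxy : x + y = (x + y₁) + y₂ := by rw [add_assoc, hsum]
      calc w l (x + y) = w l ((x + y₁) + y₂) := by rw [hxy]
        _ ≤ C₁ * w m₁ (x + y₁) := e1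
        _ ≤ C₁ * (C * w m x) := by nlinarith
        _ = C₁ * C * w m x := by ring

/-- The half-open unit cube with corner at lattice point `j`. -/
def latCube (d : ℕ) (j : Fin d → ℤ) : Set (EuclideanSpace ℝ (Fin d)) :=
  (MeasurableEquiv.toLp 2 (Fin d → ℝ)).symm ⁻¹'
    (Set.univ.pi fun i => Set.Ico (j i : ℝ) (j i + 1))

lemma mem_latCube {j : Fin d → ℤ} {x : EuclideanSpace ℝ (Fin d)} :
    x ∈ latCube d j ↔ ∀ i, (j i : ℝ) ≤ x i ∧ x i < j i + 1 := by
  simp [latCube, Set.mem_pi, Set.mem_Ico, MeasurableEquiv.toLp]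
  exact Iff.rfl

lemma measurableSet_latCube (j : Fin d → ℤ) : MeasurableSet (latCube d j) :=
  (MeasurableEquiv.toLp 2 (Fin d → ℝ)).symm.measurable
    (MeasurableSet.univ_pi fun _ => measurableSet_Ico)

lemma volume_latCube (j : Fin d → ℤ) : volume (latCube d j) = 1 := by
  rw [latCube, (EuclideanSpace.volume_preserving_symm_measurableEquiv_toLp (Fin d)).measure_preimage
    ((MeasurableSet.univ_pi fun _ => measurableSet_Ico).nullMeasurableSet)]
  rw [volume_pi_pi]
  simp [Real.volume_Ico]

lemma iUnion_latCube : (⋃ j : Fin d → ℤ, latCube d j) = Set.univ := by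
  ext x
  simp only [Set.mem_iUnion, Set.mem_univ, iff_true]
  refine ⟨fun i => ⌊x i⌋, mem_latCube.mpr fun i => ⟨Int.floor_le _, ?_⟩⟩
  push_cast
  exact Int.lt_floor_add_one _

lemma pairwise_disjoint_latCube :
    Pairwise (Function.onFun Disjoint (latCube d)) := by
  intro j j' hjj'
  rw [Function.onFun, Set.disjoint_left]
  intro x hx hx'
  apply hjj'
  funext i
  have h1 := (mem_latCube.mp hx) i
  have h2 := (mem_latCube.mp hx') i
  have e1 : ⌊x i⌋ = j i := by
    rw [Int.floor_eq_iff]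
    · exact ⟨h1.1, by push_cast; exact h1.2⟩
  have e2 : ⌊x i⌋ = j' i := by
    rw [Int.floor_eq_iff]
    · exact ⟨h2.1, by push_cast; exact h2.2⟩
  rw [← e1, e2]

lemma intPt_apply (j : Fin d → ℤ) (i : Fin d) : intPt d j i = (j i : ℝ) := rfl

lemma norm_le_d {v : EuclideanSpace ℝ (Fin d)} (h : ∀ i, |v i| ≤ 1) : ‖v‖ ≤ d := by
  have h1 : ‖v‖ ≤ Real.sqrt d := by
    rw [EuclideanSpace.norm_eq]
    apply Real.sqrt_le_sqrt
    calc ∑ i, ‖v i‖ ^ 2 ≤ ∑ _i : Fin d, 1 := by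
          apply Finset.sum_le_sum
          intro i _
          have := h i
          rw [Real.norm_eq_abs]
          nlinarith [abs_nonneg (v i)]
      _ = d := by simp
  have h2 : Real.sqrt d ≤ d := by
    have : (d : ℝ) ≤ (d : ℝ) ^ 2 := by
      rcases Nat.eq_zero_or_pos d with h0 | h0
      · simp [h0]
      · have : (1:ℝ) ≤ d := by exact_mod_cast h0
        nlinarith
    calc Real.sqrt d ≤ Real.sqrt ((d:ℝ)^2) := Real.sqrt_le_sqrt this
      _ = d := by rw [Real.sqrt_sq (by positivity)]
  linarith

lemma norm_sub_intPt_le {j : Fin d → ℤ} {x : EuclideanSpace ℝ (Fin d)}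
    (hx : x ∈ latCube d j) : ‖x - intPt d j‖ ≤ d := by
  apply norm_le_d
  intro i
  have h := (mem_latCube.mp hx) i
  have : (x - intPt d j) i = x i - (j i : ℝ) := rfl
  rw [this, abs_le]
  constructor <;> [linarith [h.1]; linarith [h.2]]

lemma norm_intPt_sub_le {j : Fin d → ℤ} {x : EuclideanSpace ℝ (Fin d)}
    (hx : x ∈ latCube d j) : ‖intPt d j - x‖ ≤ d := by
  rw [norm_sub_rev]; exact norm_sub_intPt_le hx

end Helpers

/-- For a weight function system `𝒲` on `ℝ^d` satisfying (wM), condition (N) holds iff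
for every `λ > 0` there is `μ > 0` with `∑_{j ∈ ℤ^d} w^λ(j)/w^μ(j) < ∞`. -/
theorem stmt1 (d : ℕ) (w : ℝ → EuclideanSpace ℝ (Fin d) → ℝ)
    (hW : IsWFS d w) (hwM : WFS_wM_B d w) :
    WFS_N_B d w ↔
      ∀ l, 0 < l → ∃ m, 0 < m ∧
        Summable fun j : Fin d → ℤ => w l (intPt d j) / w m (intPt d j) := by
  have wpos : ∀ l, 0 < l → ∀ x, (0:ℝ) < w l x := fun l hl x =>
    lt_of_lt_of_le one_pos (hW.one_le l hl x)
  constructor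
  · -- (N) → summable
    intro hN l hl
    obtain ⟨a, ha, C₁, hC₁, h₁⟩ := wM_ext hwM d l hl
    obtain ⟨b, hb, hInt⟩ := hN a ha
    obtain ⟨m, hm, C₂, hC₂, h₂⟩ := wM_ext hwM d b hb
    refine ⟨m, hm, ?_⟩
    set g : (Fin d → ℤ) → ℝ := fun j => w l (intPt d j) / w m (intPt d j) with hg
    have hgpos : ∀ j, 0 ≤ g j := fun j =>
      div_nonneg (wpos l hl _).le (wpos m hm _).le
    set F : EuclideanSpace ℝ (Fin d) → ℝ≥0∞ :=
      fun x => ENNReal.ofReal (C₁ * C₂ * (w a x / w b x)) with hF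
    have hFmeas : Measurable F := by
      apply ENNReal.measurable_ofReal.comp
      exact (continuous_const.mul (((hW.cont a ha).div (hW.cont b hb)
        (fun x => (wpos b hb x).ne')))).measurable
    -- pointwise bound on each cube
    have key : ∀ j : Fin d → ℤ, ∀ x ∈ latCube d j,
        ENNReal.ofReal (g j) ≤ F x := by
      intro j x hx
      apply ENNReal.ofReal_le_ofReal
      have e1 : w l (intPt d j) ≤ C₁ * w a x := by
        have := h₁ x (intPt d j - x) (norm_intPt_sub_le hx)
        simpa using this
      have e2 : w b x ≤ C₂ * w m (intPt d j) := by
        have := h₂ (intPt d j) (x - intPt d j) (norm_sub_intPt_le hx)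
        simpa using this
      rw [hg]
      rw [div_le_iff₀ (wpos m hm _)]
      have hbx := wpos b hb x
      have hax := wpos a ha x
      have hmx := wpos m hm (intPt d j)
      have : C₁ * C₂ * (w a x / w b x) * w m (intPt d j)
          = (C₁ * w a x) * (C₂ * w m (intPt d j)) / w b x := by
        field_simp
      rw [this, le_div_iff₀ hbx]
      exact mul_le_mul e1 e2 hbx.le (by positivity)
    have hsum_le : ∑' j : Fin d → ℤ, ENNReal.ofReal (g j) < ⊤ := by
      have step1 : ∀ j : Fin d → ℤ,
          ENNReal.ofReal (g j) ≤ ∫⁻ x in latCube d j, F x := by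
        intro j
        have : ENNReal.ofReal (g j) = ∫⁻ _x in latCube d j, ENNReal.ofReal (g j) := by
          rw [MeasureTheory.setLIntegral_const, volume_latCube, mul_one]
        rw [this]
        exact MeasureTheory.setLIntegral_mono hFmeas (key j)
      calc ∑' j : Fin d → ℤ, ENNReal.ofReal (g j)
          ≤ ∑' j : Fin d → ℤ, ∫⁻ x in latCube d j, F x := ENNReal.tsum_le_tsum step1
        _ = ∫⁻ x in ⋃ j : Fin d → ℤ, latCube d j, F x :=
            (MeasureTheory.lintegral_iUnion measurableSet_latCube
              pairwise_disjoint_latCube F).symm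
        _ = ∫⁻ x, F x := by rw [iUnion_latCube, MeasureTheory.Measure.restrict_univ]
        _ = ENNReal.ofReal (C₁ * C₂) * ∫⁻ x, ENNReal.ofReal (w a x / w b x) := by
            have hmeas : Measurable fun x => ENNReal.ofReal (w a x / w b x) :=
              ((hW.cont a ha).div (hW.cont b hb)
                fun x => (wpos b hb x).ne').measurable.ennreal_ofReal
            rw [← MeasureTheory.lintegral_const_mul _ hmeas]
            apply MeasureTheory.lintegral_congr
            intro x
            rw [hF, ← ENNReal.ofReal_mul (by positivity)]
        _ < ⊤ := ENNReal.mul_lt_top ENNReal.ofReal_lt_top hInt.lintegral_lt_top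
    have := ENNReal.summable_toReal hsum_le.ne
    refine this.congr fun j => ?_
    rw [ENNReal.toReal_ofReal (hgpos j)]
  · -- summable → (N)
    intro hS l hl
    obtain ⟨a, ha, C₁, hC₁, h₁⟩ := wM_ext hwM d l hl
    obtain ⟨m₀, hm₀, hsum⟩ := hS a ha
    obtain ⟨m, hm, C₂, hC₂, h₂⟩ := wM_ext hwM d m₀ hm₀
    refine ⟨m, hm, ?_⟩
    set f : EuclideanSpace ℝ (Fin d) → ℝ := fun x => w l x / w m x with hf
    have hfc : Continuous f :=
      (hW.cont l hl).div (hW.cont m hm) (fun x => (wpos m hm x).ne')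
    have hfnn : ∀ x, 0 ≤ f x := fun x =>
      div_nonneg (wpos l hl x).le (wpos m hm x).le
    set g : (Fin d → ℤ) → ℝ :=
      fun j => C₁ * C₂ * (w a (intPt d j) / w m₀ (intPt d j)) with hg
    have hgnn : ∀ j, 0 ≤ g j := fun j => by
      have := div_nonneg (wpos a ha (intPt d j)).le (wpos m₀ hm₀ (intPt d j)).le
      positivity
    have hgsum : Summable g := hsum.mul_left _
    refine ⟨hfc.aestronglyMeasurable, ?_⟩
    rw [MeasureTheory.hasFiniteIntegral_iff_ofReal
      (Filter.Eventually.of_forall hfnn)]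
    have key : ∀ j : Fin d → ℤ, ∀ x ∈ latCube d j,
        ENNReal.ofReal (f x) ≤ ENNReal.ofReal (g j) := by
      intro j x hx
      apply ENNReal.ofReal_le_ofReal
      have e1 : w l x ≤ C₁ * w a (intPt d j) := by
        have := h₁ (intPt d j) (x - intPt d j) (norm_sub_intPt_le hx)
        simpa using this
      have e2 : w m₀ (intPt d j) ≤ C₂ * w m x := by
        have := h₂ x (intPt d j - x) (norm_intPt_sub_le hx)
        simpa using this
      have hmx := wpos m hm x
      have hm₀j := wpos m₀ hm₀ (intPt d j)
      have haj := wpos a ha (intPt d j)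
      rw [hf, hg, div_le_iff₀ hmx]
      have : C₁ * C₂ * (w a (intPt d j) / w m₀ (intPt d j)) * w m x
          = (C₁ * w a (intPt d j)) * (C₂ * w m x) / w m₀ (intPt d j) := by
        field_simp
      rw [this, le_div_iff₀ hm₀j]
      exact mul_le_mul e1 e2 hm₀j.le (by positivity)
    calc ∫⁻ x, ENNReal.ofReal (f x)
        = ∫⁻ x in ⋃ j : Fin d → ℤ, latCube d j, ENNReal.ofReal (f x) := by
          rw [iUnion_latCube, MeasureTheory.Measure.restrict_univ]
      _ = ∑' j : Fin d → ℤ, ∫⁻ x in latCube d j, ENNReal.ofReal (f x) :=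
          MeasureTheory.lintegral_iUnion measurableSet_latCube
            pairwise_disjoint_latCube _
      _ ≤ ∑' j : Fin d → ℤ, ENNReal.ofReal (g j) := by
          apply ENNReal.tsum_le_tsum
          intro j
          calc ∫⁻ x in latCube d j, ENNReal.ofReal (f x)
              ≤ ∫⁻ _x in latCube d j, ENNReal.ofReal (g j) :=
                MeasureTheory.setLIntegral_mono measurable_const (key j)
            _ = ENNReal.ofReal (g j) := by
                rw [MeasureTheory.setLIntegral_const, volume_latCube, mul_one]
      _ = ENNReal.ofReal (∑' j, g j) :=
          (ENNReal.ofReal_tsum_of_nonneg hgnn hgsum).symm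
      _ < ⊤ := ENNReal.ofReal_lt_top
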